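/- arXiv:2106.12489 — 2 statements merged into one kernel-verified Lean document; each statement's English description precedes it below -/
import Mathlib

section
/- Let τ > 0, y ∈ ℝ, and 0 < ε < min(√τ, τ/|y|) (with the convention that the second bound is vacuous when y = 0). Define f(x) = τ·log(|x| + ε) + (1/2)(x − y)². Set c₁ = |y| − ε and c₂ = c₁² − 4(τ − ε|y|). If c₂ ≤ 0, then x* = 0 is a local minimizer of f; if c₂ > 0, then x* = sign(y)·(c₁ + √c₂)/2 is a local minimizer of f. -/
open Set Filter Topology

private lemma aux_zero (τ ε y : ℝ) (hτ : 0 < τ) (hε : 0 < ε)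
    (hε2 : ε * |y| < τ) (f : ℝ → ℝ)
    (hf : ∀ x, f x = τ * Real.log (|x| + ε) + (1 / 2) * (x - y) ^ 2) :
    IsLocalMin f 0 := by
  have hδ : (0:ℝ) < (τ - ε * |y|) / (|y| + 1) := by
    apply div_pos (by linarith) (by positivity)
  rw [IsLocalMin, IsMinFilter, Metric.eventually_nhds_iff]
  refine ⟨(τ - ε * |y|) / (|y| + 1), hδ, fun x hx => ?_⟩
  rw [hf x, hf 0]
  simp only [abs_zero, zero_add, zero_sub, neg_sq]
  have hxd : |x| ≤ (τ - ε * |y|) / (|y| + 1) := by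
    simpa [Real.dist_eq] using hx.le
  have hxy : |y| * |x| ≤ τ - ε * |y| := by
    have h1 : |y| * |x| ≤ |y| * ((τ - ε * |y|) / (|y| + 1)) :=
      mul_le_mul_of_nonneg_left hxd (abs_nonneg y)
    have h2 : |y| * ((τ - ε * |y|) / (|y| + 1)) ≤ τ - ε * |y| := by
      rw [mul_div_assoc']
      rw [div_le_iff₀ (by positivity)]
      nlinarith [abs_nonneg y]
    linarith
  -- log lower bound : log(|x|+ε) - log ε ≥ |x|/(|x|+ε)
  have hpos : (0:ℝ) < |x| + ε := by positivity
  have hlog : |x| / (|x| + ε) ≤ Real.log (|x| + ε) - Real.log ε := by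
    have := Real.one_sub_inv_le_log_of_pos (x := (|x| + ε) / ε) (by positivity)
    rw [Real.log_div hpos.ne' hε.ne'] at this
    have h3 : 1 - ((|x| + ε) / ε)⁻¹ = |x| / (|x| + ε) := by
      rw [inv_div]
      field_simp
      ring
    linarith [h3 ▸ this]
  -- main estimate
  have hmain : |y| * |x| ≤ τ * (|x| / (|x| + ε)) := by
    rw [mul_div_assoc']
    rw [le_div_iff₀ hpos]
    have hax := abs_nonneg x
    nlinarith
  have hxy2 : x * y ≤ |x| * |y| := by
    calc x * y ≤ |x * y| := le_abs_self _
    _ = |x| * |y| := abs_mul x y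
  nlinarith [sq_nonneg x, mul_le_mul_of_nonneg_left hlog hτ.le]

private lemma aux_pos (τ ε y : ℝ) (hε : 0 < ε) (hy : 0 < y)
    (a b : ℝ) (hb0 : 0 < b) (hba : b < a)
    (hsum : a + b = y - ε) (hprod : a * b = τ - ε * y)
    (f : ℝ → ℝ)
    (hf : ∀ x, f x = τ * Real.log (|x| + ε) + (1 / 2) * (x - y) ^ 2) :
    IsLocalMin f a := by
  have ha0 : 0 < a := hb0.trans hba
  have hd : ∀ x : ℝ, 0 < x → HasDerivAt f (τ / (x + ε) + (x - y)) x := by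
    intro x hx
    have hne : x + ε ≠ 0 := by positivity
    have h1 : HasDerivAt (fun t : ℝ => t + ε) 1 x := (hasDerivAt_id x).add_const ε
    have h2 : HasDerivAt (fun t : ℝ => Real.log (t + ε)) (1 / (x + ε)) x := by
      simpa using h1.log hne
    have h3 : HasDerivAt (fun t : ℝ => (t - y) ^ 2) (2 * (x - y)) x := by
      simpa using ((hasDerivAt_id x).sub_const y).fun_pow 2
    have hg : HasDerivAt (fun t : ℝ => τ * Real.log (t + ε) + (1 / 2) * (t - y) ^ 2)
        (τ * (1 / (x + ε)) + (1 / 2) * (2 * (x - y))) x :=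
      (h2.const_mul τ).add (h3.const_mul (1 / 2))
    have heq : (fun t : ℝ => τ * Real.log (t + ε) + (1 / 2) * (t - y) ^ 2) =ᶠ[𝓝 x] f := by
      filter_upwards [eventually_gt_nhds hx] with t ht
      rw [hf t, abs_of_pos ht]
    have := hg.congr_of_eventuallyEq heq.symm
    rw [show τ / (x + ε) + (x - y) = τ * (1 / (x + ε)) + 1 / 2 * (2 * (x - y)) by ring]
    exact this
  have key : ∀ x : ℝ, 0 < x → deriv f x = (x - a) * (x - b) / (x + ε) := by
    intro x hx
    rw [(hd x hx).deriv]
    have hne : x + ε ≠ 0 := by positivity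
    field_simp
    linear_combination x * hsum - hprod
  have hdiff : ∀ x : ℝ, 0 < x → DifferentiableAt ℝ f x := fun x hx =>
    (hd x hx).differentiableAt
  apply isLocalMin_of_deriv_Ioo hba (lt_add_one a) (hdiff a ha0).continuousAt
  · intro x hx
    exact (hdiff x (hb0.trans hx.1)).differentiableWithinAt
  · intro x hx
    exact (hdiff x (ha0.trans hx.1)).differentiableWithinAt
  · intro x hx
    have hx0 : 0 < x := hb0.trans hx.1
    rw [key x hx0]
    apply div_nonpos_of_nonpos_of_nonneg _ (by linarith)
    nlinarith [hx.1, hx.2]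
  · intro x hx
    have hx0 : 0 < x := ha0.trans hx.1
    rw [key x hx0]
    apply div_nonneg _ (by linarith)
    nlinarith [hx.1]

theorem log_shrinkage_local_min (τ ε y : ℝ) (hτ : 0 < τ) (hε : 0 < ε)
    (hε1 : ε < Real.sqrt τ) (hε2 : ε * |y| < τ)
    (f : ℝ → ℝ) (hf : ∀ x, f x = τ * Real.log (|x| + ε) + (1 / 2) * (x - y) ^ 2)
    (c₁ c₂ : ℝ) (hc₁ : c₁ = |y| - ε) (hc₂ : c₂ = c₁ ^ 2 - 4 * (τ - ε * |y|)) :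
    (c₂ ≤ 0 → IsLocalMin f 0) ∧
    (0 < c₂ → IsLocalMin f (Real.sign y * ((c₁ + Real.sqrt c₂) / 2))) := by
  constructor
  · intro _
    exact aux_zero τ ε y hτ hε hε2 f hf
  · intro hc2
    have hτε : ε ^ 2 < τ := (Real.lt_sqrt hε.le).mp hε1
    have hsq : Real.sqrt c₂ ^ 2 = c₂ := Real.sq_sqrt hc2.le
    have hsqpos : 0 < Real.sqrt c₂ := Real.sqrt_pos.mpr hc2
    have hc₁pos : 0 < c₁ := by
      by_contra h
      push_neg at h
      nlinarith [abs_nonneg y, sq_nonneg (|y| + ε)]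
    set a := (c₁ + Real.sqrt c₂) / 2 with ha_def
    set b := (c₁ - Real.sqrt c₂) / 2 with hb_def
    have ha0 : 0 < a := by rw [ha_def]; linarith
    have hba : b < a := by
      rw [ha_def, hb_def]; linarith
    have hsum : a + b = |y| - ε := by rw [ha_def, hb_def]; linarith
    have hprod : a * b = τ - ε * |y| := by
      rw [ha_def, hb_def]
      nlinarith [hsq]
    have hb0 : 0 < b := by
      by_contra h
      push_neg at h
      nlinarith [mul_nonpos_of_nonneg_of_nonpos ha0.le h]
    have hy0 : y ≠ 0 := by
      intro h
      rw [h, abs_zero] at hc₁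
      linarith
    rcases hy0.lt_or_gt with hyn | hyp
    · -- y < 0
      rw [Real.sign_of_neg hyn]
      have habs : |y| = -y := abs_of_neg hyn
      have hyy : 0 < -y := by linarith
      have hg : ∀ x, f (-x) = τ * Real.log (|x| + ε) + (1 / 2) * (x - (-y)) ^ 2 := by
        intro x
        rw [hf (-x), abs_neg]
        ring_nf
      have hmin : IsLocalMin (fun x => f (-x)) a :=
        aux_pos τ ε (-y) hε hyy a b hb0 hba (by rw [← habs]; exact hsum)
          (by rw [← habs]; exact hprod) _ hg
      have ht : Filter.Tendsto (fun x : ℝ => -x) (𝓝 (-a)) (𝓝 a) := by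
        simpa using continuous_neg.tendsto (-a)
      have hmin' : IsMinFilter (fun x => f (-x)) (𝓝 a) ((fun x : ℝ => -x) (-a)) := by
        show IsMinFilter (fun x => f (-x)) (𝓝 a) (-(-a))
        rw [neg_neg]
        exact hmin
      have hcomp := hmin'.comp_tendsto ht
      have hfa : IsLocalMin f (-a) := by
        have h := hcomp
        simp only [Function.comp_def, neg_neg] at h
        exact h
      simpa [neg_one_mul] using hfa
    · -- y > 0
      rw [Real.sign_of_pos hyp, one_mul]
      have habs : |y| = y := abs_of_pos hyp
      exact aux_pos τ ε y hε hyp a b hb0 hba (habs ▸ hsum) (habs ▸ hprod) f hf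
end

section
/- Let Y ∈ ℂ^{m×n} have SVD Y = U·diag(σ₁,…,σ_r)·V^H and let λ > 0. Then X* = U·diag(max(σ₁ − λ, 0), …, max(σ_r − λ, 0))·V^H is the unique minimizer of λ‖X‖_* + (1/2)‖X − Y‖_F² over X ∈ ℂ^{m×n} (singular value thresholding). -/
open scoped ComplexOrder
open Matrix

/-- Singular values of a complex matrix: square roots of the eigenvalues of `Aᴴ * A`. -/
noncomputable def singularValues {m n : ℕ} (A : Matrix (Fin m) (Fin n) ℂ) : Fin n → ℝ :=
  fun i => Real.sqrt ((Matrix.posSemidef_conjTranspose_mul_self A).isHermitian.eigenvalues i)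

/-- Nuclear norm: sum of the singular values. -/
noncomputable def nuclearNorm {m n : ℕ} (A : Matrix (Fin m) (Fin n) ℂ) : ℝ :=
  ∑ i, singularValues A i

/-- Rectangular diagonal matrix built from a sequence of scalars. -/
def rectDiag (m n : ℕ) (σ : ℕ → ℝ) : Matrix (Fin m) (Fin n) ℂ :=
  Matrix.of fun i j => if (i : ℕ) = (j : ℕ) then ((σ (i : ℕ) : ℝ) : ℂ) else 0

namespace SVT

open Polynomial

lemma det_conj_diag {k : ℕ} {W : Matrix (Fin k) (Fin k) ℂ}
    (hW : W ∈ Matrix.unitaryGroup (Fin k) ℂ) (d : Fin k → ℂ) (x : ℂ) :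
    Matrix.det (Matrix.scalar (Fin k) x - W * Matrix.diagonal d * Wᴴ) = ∏ i, (x - d i) := by
  have hWW : W * Wᴴ = 1 := (Matrix.mem_unitaryGroup_iff).mp hW
  have h1 : Matrix.scalar (Fin k) x - W * Matrix.diagonal d * Wᴴ
      = W * Matrix.diagonal (fun i => x - d i) * Wᴴ := by
    have : (Matrix.diagonal (fun i => x - d i) : Matrix (Fin k) (Fin k) ℂ)
        = Matrix.scalar (Fin k) x - Matrix.diagonal d := by
      rw [Matrix.scalar_apply, ← Matrix.diagonal_sub]
    rw [this, Matrix.mul_sub, Matrix.sub_mul]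
    congr 1
    · rw [Matrix.scalar_apply, ← Matrix.smul_one_eq_diagonal, Matrix.mul_smul, Matrix.mul_one,
        Matrix.smul_mul, hWW, Matrix.smul_one_eq_diagonal]
  rw [h1, Matrix.det_mul, Matrix.det_mul, mul_comm, ← mul_assoc, ← Matrix.det_mul,
    ← Matrix.star_eq_conjTranspose, (Matrix.mem_unitaryGroup_iff').mp hW]
  simp [Matrix.det_diagonal]

lemma eig_multiset {k : ℕ} {A : Matrix (Fin k) (Fin k) ℂ} (hA : A.IsHermitian)
    {W : Matrix (Fin k) (Fin k) ℂ} (hW : W ∈ Matrix.unitaryGroup (Fin k) ℂ)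
    (d : Fin k → ℝ) (h : A = W * Matrix.diagonal (fun i => (d i : ℂ)) * Wᴴ) :
    Finset.univ.val.map hA.eigenvalues = Finset.univ.val.map d := by
  have hspec : A = (hA.eigenvectorUnitary : Matrix (Fin k) (Fin k) ℂ) *
      Matrix.diagonal (fun i => (hA.eigenvalues i : ℂ)) *
      ((hA.eigenvectorUnitary : Matrix (Fin k) (Fin k) ℂ))ᴴ := by
    simpa [Function.comp_def, Matrix.star_eq_conjTranspose] using hA.spectral_theorem
  have hpq : (∏ i, (X - C ((hA.eigenvalues i : ℝ) : ℂ))) = ∏ i, (X - C ((d i : ℝ) : ℂ)) := by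
    apply Polynomial.funext
    intro x
    have h1 := det_conj_diag hA.eigenvectorUnitary.2 (fun i => ((hA.eigenvalues i : ℝ) : ℂ)) x
    have h2 := det_conj_diag hW (fun i => ((d i : ℝ) : ℂ)) x
    rw [← hspec] at h1
    rw [← h] at h2
    simp only [eval_prod, eval_sub, eval_X, eval_C]
    rw [← h1, ← h2]
  have hr1 : ∀ (e : Fin k → ℝ), (∏ i, (X - C ((e i : ℝ) : ℂ))).roots
      = Finset.univ.val.map (fun i => ((e i : ℝ) : ℂ)) := by
    intro e
    rw [Finset.prod_eq_multiset_prod]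
    have : Multiset.map (fun i => X - C ((e i : ℝ) : ℂ)) Finset.univ.val
        = Multiset.map (fun a : ℂ => X - C a)
          (Multiset.map (fun i => ((e i : ℝ) : ℂ)) Finset.univ.val) := by
      rw [Multiset.map_map]; rfl
    rw [this, Polynomial.roots_multiset_prod_X_sub_C]
  have := (hr1 hA.eigenvalues).symm.trans (by rw [hpq, hr1 d])
  have h3 : (Finset.univ.val.map hA.eigenvalues).map (fun r : ℝ => (r : ℂ))
      = (Finset.univ.val.map d).map (fun r : ℝ => (r : ℂ)) := by
    rw [Multiset.map_map, Multiset.map_map]; exact this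
  exact Multiset.map_injective Complex.ofReal_injective h3

lemma sum_f_eig {k : ℕ} {A : Matrix (Fin k) (Fin k) ℂ} (hA : A.IsHermitian)
    {W : Matrix (Fin k) (Fin k) ℂ} (hW : W ∈ Matrix.unitaryGroup (Fin k) ℂ)
    (d : Fin k → ℝ) (h : A = W * Matrix.diagonal (fun i => (d i : ℂ)) * Wᴴ)
    (f : ℝ → ℝ) : ∑ i, f (hA.eigenvalues i) = ∑ i, f (d i) := by
  have := eig_multiset hA hW d h
  have h2 : ((Finset.univ.val.map hA.eigenvalues).map f).sum
      = ((Finset.univ.val.map d).map f).sum := by rw [this]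
  simpa [Multiset.map_map, Finset.sum, Function.comp_def] using h2

lemma nuclearNorm_conj {m n : ℕ} (A : Matrix (Fin m) (Fin n) ℂ)
    {U : Matrix (Fin m) (Fin m) ℂ} {V : Matrix (Fin n) (Fin n) ℂ}
    (hU : U ∈ Matrix.unitaryGroup (Fin m) ℂ) (hV : V ∈ Matrix.unitaryGroup (Fin n) ℂ) :
    nuclearNorm (U * A * Vᴴ) = nuclearNorm A := by
  have hH : (Aᴴ * A).IsHermitian := (Matrix.posSemidef_conjTranspose_mul_self A).isHermitian
  set W : Matrix (Fin n) (Fin n) ℂ := (hH.eigenvectorUnitary : Matrix (Fin n) (Fin n) ℂ) with hWdef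
  have hWu : W ∈ Matrix.unitaryGroup (Fin n) ℂ := hH.eigenvectorUnitary.2
  have hspec : Aᴴ * A = W * Matrix.diagonal (fun i => (hH.eigenvalues i : ℂ)) * Wᴴ := by
    simpa [Function.comp_def, Matrix.star_eq_conjTranspose] using hH.spectral_theorem
  have hUU : Uᴴ * U = 1 := by
    rw [← Matrix.star_eq_conjTranspose]; exact (Matrix.mem_unitaryGroup_iff').mp hU
  have hBB : (U * A * Vᴴ)ᴴ * (U * A * Vᴴ)
      = (V * W) * Matrix.diagonal (fun i => (hH.eigenvalues i : ℂ)) * (V * W)ᴴ := by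
    have h0 : (U * A * Vᴴ)ᴴ * (U * A * Vᴴ) = V * (Aᴴ * A) * Vᴴ := by
      simp only [Matrix.conjTranspose_mul, Matrix.conjTranspose_conjTranspose,
        Matrix.mul_assoc]
      rw [← Matrix.mul_assoc Uᴴ U (A * Vᴴ), hUU, Matrix.one_mul]
    rw [h0]
    conv_lhs => rw [hspec]
    rw [Matrix.conjTranspose_mul V W]
    simp [Matrix.mul_assoc]
  have h1 := sum_f_eig (Matrix.posSemidef_conjTranspose_mul_self (U * A * Vᴴ)).isHermitian
    (mul_mem hV hWu) _ hBB Real.sqrt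
  have h2 := sum_f_eig hH hWu _ hspec Real.sqrt
  simp only [nuclearNorm, singularValues]
  rw [h1, ← h2]

lemma fin_sum_ite {m : ℕ} {M : Type*} [AddCommMonoid M] (t : ℕ) (f : Fin m → M) :
    (∑ i : Fin m, if (i:ℕ) = t then f i else 0) = if h : t < m then f ⟨t,h⟩ else 0 := by
  split_ifs with h
  · rw [Finset.sum_eq_single ⟨t,h⟩]
    · simp
    · intro b _ hb
      exact if_neg (fun hbt => hb (Fin.ext hbt))
    · simp
  · apply Finset.sum_eq_zero; intro i _
    rw [if_neg]
    have := i.2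
    omega

lemma rectDiag_conjTranspose_mul_self (m n : ℕ) (d : ℕ → ℝ) :
    (rectDiag m n d)ᴴ * rectDiag m n d
      = Matrix.diagonal (fun j : Fin n => ((if (j:ℕ) < m then (d (j:ℕ))^2 else 0 : ℝ) : ℂ)) := by
  ext j k
  by_cases hjk : j = k
  · subst hjk
    rw [Matrix.diagonal_apply_eq]
    simp only [Matrix.mul_apply, Matrix.conjTranspose_apply, rectDiag, Matrix.of_apply]
    have hcong : ∀ i : Fin m, star (if (i:ℕ) = (j:ℕ) then ((d (i:ℕ) : ℝ) : ℂ) else 0) *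
        (if (i:ℕ) = (j:ℕ) then ((d (i:ℕ) : ℝ) : ℂ) else 0)
        = if (i:ℕ) = (j:ℕ) then (((d (i:ℕ))^2 : ℝ) : ℂ) else 0 := by
      intro i
      split_ifs with h
      · rw [Complex.star_def, Complex.conj_ofReal]; push_cast; ring
      · simp
    rw [Finset.sum_congr rfl (fun i _ => hcong i), fin_sum_ite]
    split_ifs with h <;> simp
  · rw [Matrix.diagonal_apply_ne _ hjk]
    simp only [Matrix.mul_apply, Matrix.conjTranspose_apply, rectDiag, Matrix.of_apply]
    apply Finset.sum_eq_zero; intro i _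
    have hne : (j:ℕ) ≠ (k:ℕ) := fun h => hjk (Fin.ext h)
    by_cases h1 : (i:ℕ) = (j:ℕ)
    · rw [if_neg (fun h2 => hne (h1 ▸ h2))]; ring
    · rw [if_neg h1]; simp

lemma nuclearNorm_rectDiag (m n : ℕ) (d : ℕ → ℝ) (hd : ∀ i, 0 ≤ d i) :
    nuclearNorm (rectDiag m n d) = ∑ j : Fin n, (if (j:ℕ) < m then d (j:ℕ) else 0) := by
  have h := rectDiag_conjTranspose_mul_self m n d
  have h' : (rectDiag m n d)ᴴ * rectDiag m n d = 1 *
      Matrix.diagonal (fun j : Fin n => ((if (j:ℕ) < m then (d (j:ℕ))^2 else 0 : ℝ) : ℂ)) * 1ᴴ := by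
    simpa using h
  have := sum_f_eig (Matrix.posSemidef_conjTranspose_mul_self (rectDiag m n d)).isHermitian
    (one_mem _) _ h' Real.sqrt
  simp only [nuclearNorm, singularValues]
  rw [this]
  congr 1; ext j
  split_ifs with hj
  · exact Real.sqrt_sq (hd _)
  · exact Real.sqrt_zero

lemma star_mul_self_re' (z : ℂ) : (star z * z).re = ‖z‖ ^ 2 := by
  rw [Complex.star_def, Complex.sq_norm, Complex.normSq_apply, Complex.mul_re]
  simp only [Complex.conj_re, Complex.conj_im]
  ring

lemma sum_fin_dite_le {m n : ℕ} (f : Fin m → ℝ) (hf : ∀ i, 0 ≤ f i) :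
    (∑ j : Fin n, if h : (j:ℕ) < m then f ⟨(j:ℕ), h⟩ else 0) ≤ ∑ i, f i := by
  rw [Fin.sum_univ_eq_sum_range (fun t => if h : t < m then f ⟨t, h⟩ else 0) n]
  have h1 : ∑ t ∈ Finset.range n, (if h : t < m then f ⟨t, h⟩ else 0)
      = ∑ t ∈ Finset.range n ∩ Finset.range m, (if h : t < m then f ⟨t, h⟩ else 0) := by
    rw [← Finset.sum_ite_mem]
    apply Finset.sum_congr rfl
    intro t _
    by_cases h : t < m
    · simp [h, Finset.mem_range]
    · simp [h, Finset.mem_range]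
  rw [h1]
  have h2 : (∑ t ∈ Finset.range m, if h : t < m then f ⟨t, h⟩ else 0) = ∑ i, f i := by
    rw [← Fin.sum_univ_eq_sum_range (fun t => if h : t < m then f ⟨t, h⟩ else 0) m]
    apply Finset.sum_congr rfl
    intro i _
    simp [i.2]
  rw [← h2]
  apply Finset.sum_le_sum_of_subset_of_nonneg (Finset.inter_subset_right)
  intro t _ _
  by_cases h : t < m
  · simp only [dif_pos h]; exact hf _
  · simp [h]

lemma diagSum_le_nuclearNorm {m n : ℕ} (B : Matrix (Fin m) (Fin n) ℂ) :
    (∑ j : Fin n, if h : (j:ℕ) < m then ‖B ⟨(j:ℕ), h⟩ j‖ else 0)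
      ≤ nuclearNorm B := by
  have hP := Matrix.posSemidef_conjTranspose_mul_self B
  have hH : (Bᴴ * B).IsHermitian := hP.isHermitian
  set W : Matrix (Fin n) (Fin n) ℂ := (hH.eigenvectorUnitary : Matrix (Fin n) (Fin n) ℂ)
    with hWdef
  set e : Fin n → ℝ := hH.eigenvalues with hedef
  have he : ∀ k, 0 ≤ e k := fun k => hP.eigenvalues_nonneg k
  have hWW : Wᴴ * W = 1 := by
    rw [← Matrix.star_eq_conjTranspose]
    exact (Matrix.mem_unitaryGroup_iff').mp hH.eigenvectorUnitary.2
  have hWWc : W * Wᴴ = 1 := by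
    rw [← Matrix.star_eq_conjTranspose]
    exact (Matrix.mem_unitaryGroup_iff).mp hH.eigenvectorUnitary.2
  set G : Matrix (Fin m) (Fin n) ℂ := B * W with hGdef
  have hcolW : ∀ k : Fin n, ∑ j : Fin n, ‖W j k‖ ^ 2 = 1 := by
    intro k
    have h1 : (Wᴴ * W) k k = 1 := by rw [hWW, Matrix.one_apply_eq]
    rw [Matrix.mul_apply] at h1
    have h2 := congrArg Complex.re h1
    rw [Complex.re_sum] at h2
    simp only [Matrix.conjTranspose_apply, Complex.one_re] at h2
    rw [← h2]
    apply Finset.sum_congr rfl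
    intro j _
    rw [star_mul_self_re']
  have hGG : Gᴴ * G = Matrix.diagonal (fun k => (e k : ℂ)) := by
    have h0 : Gᴴ * G = Wᴴ * (Bᴴ * B) * W := by
      rw [hGdef, Matrix.conjTranspose_mul]
      simp [Matrix.mul_assoc]
    rw [h0, ← Matrix.star_eq_conjTranspose]
    simpa [Function.comp_def, Unitary.conjStarAlgAut_star_apply] using hH.conjStarAlgAut_star_eigenvectorUnitary
  have hcolG : ∀ k : Fin n, ∑ i : Fin m, ‖G i k‖ ^ 2 = e k := by
    intro k
    have h1 : (Gᴴ * G) k k = (e k : ℂ) := by rw [hGG, Matrix.diagonal_apply_eq]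
    rw [Matrix.mul_apply] at h1
    have h2 := congrArg Complex.re h1
    rw [Complex.re_sum] at h2
    simp only [Matrix.conjTranspose_apply, Complex.ofReal_re] at h2
    rw [← h2]
    apply Finset.sum_congr rfl
    intro i _
    rw [star_mul_self_re']
  have hB : ∀ (i : Fin m) (j : Fin n), B i j = ∑ k, G i k * star (W j k) := by
    intro i j
    have h1 : B = G * Wᴴ := by rw [hGdef, Matrix.mul_assoc, hWWc, Matrix.mul_one]
    rw [h1]
    rw [Matrix.mul_apply]
    apply Finset.sum_congr rfl
    intro k _
    rw [Matrix.conjTranspose_apply]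
  have step1 : (∑ j : Fin n, if h : (j:ℕ) < m then ‖B ⟨(j:ℕ), h⟩ j‖ else 0)
      ≤ ∑ k : Fin n, ∑ j : Fin n,
          (if h : (j:ℕ) < m then ‖G ⟨(j:ℕ), h⟩ k‖ * ‖W j k‖ else 0) := by
    rw [Finset.sum_comm]
    apply Finset.sum_le_sum
    intro j _
    by_cases h : (j:ℕ) < m
    · simp only [dif_pos h]
      rw [hB ⟨(j:ℕ), h⟩ j]
      calc ‖∑ k, G ⟨(j:ℕ), h⟩ k * star (W j k)‖
          ≤ ∑ k, ‖G ⟨(j:ℕ), h⟩ k * star (W j k)‖ := norm_sum_le _ _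
        _ = ∑ k, ‖G ⟨(j:ℕ), h⟩ k‖ * ‖W j k‖ := by
            apply Finset.sum_congr rfl; intro k _
            rw [norm_mul, Complex.star_def, Complex.norm_conj]
    · simp [h]
  refine step1.trans ?_
  have step2 : ∀ k : Fin n, (∑ j : Fin n,
      (if h : (j:ℕ) < m then ‖G ⟨(j:ℕ), h⟩ k‖ * ‖W j k‖ else 0))
      ≤ Real.sqrt (e k) := by
    intro k
    set f : Fin n → ℝ := fun j => if h : (j:ℕ) < m then ‖G ⟨(j:ℕ), h⟩ k‖ else 0
      with hfdef
    set g : Fin n → ℝ := fun j => ‖W j k‖ with hgdef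
    have hfg : ∀ j : Fin n, (if h : (j:ℕ) < m then
        ‖G ⟨(j:ℕ), h⟩ k‖ * ‖W j k‖ else 0) = f j * g j := by
      intro j; by_cases h : (j:ℕ) < m <;> simp [hfdef, hgdef, h]
    rw [Finset.sum_congr rfl (fun j _ => hfg j)]
    refine (Real.sum_mul_le_sqrt_mul_sqrt _ f g).trans ?_
    have h1 : ∑ j, f j ^ 2 ≤ e k := by
      have hsq : ∀ j : Fin n, f j ^ 2
          = (if h : (j:ℕ) < m then ‖G ⟨(j:ℕ), h⟩ k‖ ^ 2 else 0) := by
        intro j; by_cases h : (j:ℕ) < m <;> simp [hfdef, h]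
      rw [Finset.sum_congr rfl (fun j _ => hsq j), ← hcolG k]
      exact sum_fin_dite_le (fun i : Fin m => ‖G i k‖ ^ 2) (fun i => sq_nonneg _)
    have h2 : ∑ j, g j ^ 2 = 1 := hcolW k
    rw [h2, Real.sqrt_one, mul_one]
    exact Real.sqrt_le_sqrt h1
  calc ∑ k : Fin n, ∑ j : Fin n,
        (if h : (j:ℕ) < m then ‖G ⟨(j:ℕ), h⟩ k‖ * ‖W j k‖ else 0)
      ≤ ∑ k, Real.sqrt (e k) := Finset.sum_le_sum (fun k _ => step2 k)
    _ = nuclearNorm B := rfl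

lemma abs_sub_real_sq (z : ℂ) (s : ℝ) :
    ‖z - (s:ℂ)‖ ^ 2 = (‖z‖ - s)^2 + 2*s*(‖z‖ - z.re) := by
  have hz : ‖z‖ ^ 2 = z.re^2 + z.im^2 := by
    rw [Complex.sq_norm, Complex.normSq_apply]; ring
  rw [Complex.sq_norm, Complex.normSq_apply]
  simp only [Complex.sub_re, Complex.sub_im, Complex.ofReal_re, Complex.ofReal_im]
  nlinarith [hz]

lemma scalar_ineq {lam s : ℝ} (hlam : 0 < lam) (hs : 0 ≤ s) (z : ℂ) :
    lam * max (s - lam) 0 + (1/2) * (max (s - lam) 0 - s)^2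
      + (s * (‖z‖ - z.re) + (1/2) * (‖z‖ - max (s - lam) 0)^2)
    ≤ lam * ‖z‖ + (1/2) * ‖z - (s:ℂ)‖^2 := by
  have ha : 0 ≤ ‖z‖ := norm_nonneg z
  have hre : z.re ≤ ‖z‖ := Complex.re_le_norm z
  rw [abs_sub_real_sq]
  rcases le_or_gt s lam with h | h
  · have ht : max (s - lam) 0 = 0 := max_eq_right (by linarith)
    rw [ht]; nlinarith
  · have ht : max (s - lam) 0 = s - lam := max_eq_left (by linarith)
    rw [ht]; nlinarith

lemma scalar_eq_case {lam s : ℝ} (hlam : 0 < lam) (hs : 0 ≤ s) (z : ℂ)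
    (h1 : s * (‖z‖ - z.re) = 0) (h2 : ‖z‖ = max (s - lam) 0) :
    z = ((max (s - lam) 0 : ℝ) : ℂ) := by
  rcases le_or_gt s lam with h | h
  · have ht : max (s - lam) 0 = 0 := max_eq_right (by linarith)
    rw [ht] at h2 ⊢
    rw [norm_eq_zero] at h2
    simp [h2]
  · have ht : max (s - lam) 0 = s - lam := max_eq_left (by linarith)
    have hs0 : 0 < s := lt_trans hlam h
    have hre : z.re = ‖z‖ := by
      rcases mul_eq_zero.mp h1 with h' | h'
      · linarith
      · linarith
    have hz : ‖z‖ ^ 2 = z.re^2 + z.im^2 := by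
      rw [Complex.sq_norm, Complex.normSq_apply]; ring
    have him : z.im = 0 := by nlinarith
    apply Complex.ext
    · rw [Complex.ofReal_re, ← h2, hre]
    · rw [Complex.ofReal_im, him]

lemma frob_eq_trace {m n : ℕ} (A : Matrix (Fin m) (Fin n) ℂ) :
    ∑ i, ∑ j, ‖A i j‖ ^ 2 = (Matrix.trace (Aᴴ * A)).re := by
  have h : (Matrix.trace (Aᴴ * A)).re = ∑ j, ∑ i, ‖A i j‖^2 := by
    rw [Matrix.trace, Complex.re_sum]
    apply Finset.sum_congr rfl
    intro j _
    rw [Matrix.diag_apply, Matrix.mul_apply, Complex.re_sum]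
    apply Finset.sum_congr rfl
    intro i _
    rw [Matrix.conjTranspose_apply, star_mul_self_re']
  rw [h, Finset.sum_comm]

lemma frob_conj {m n : ℕ} (M : Matrix (Fin m) (Fin n) ℂ)
    {U : Matrix (Fin m) (Fin m) ℂ} {V : Matrix (Fin n) (Fin n) ℂ}
    (hU : U ∈ Matrix.unitaryGroup (Fin m) ℂ) (hV : V ∈ Matrix.unitaryGroup (Fin n) ℂ) :
    ∑ i, ∑ j, ‖(U * M * Vᴴ) i j‖ ^ 2 = ∑ i, ∑ j, ‖M i j‖ ^ 2 := by
  have hUU : Uᴴ * U = 1 := by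
    rw [← Matrix.star_eq_conjTranspose]; exact (Matrix.mem_unitaryGroup_iff').mp hU
  have hVV : Vᴴ * V = 1 := by
    rw [← Matrix.star_eq_conjTranspose]; exact (Matrix.mem_unitaryGroup_iff').mp hV
  have h0 : (U * M * Vᴴ)ᴴ * (U * M * Vᴴ) = V * ((Mᴴ * M) * Vᴴ) := by
    simp only [Matrix.conjTranspose_mul, Matrix.conjTranspose_conjTranspose, Matrix.mul_assoc]
    rw [← Matrix.mul_assoc Uᴴ U (M * Vᴴ), hUU, Matrix.one_mul]
  rw [frob_eq_trace, frob_eq_trace, h0, Matrix.trace_mul_comm, Matrix.mul_assoc, hVV,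
    Matrix.mul_one]

end SVT
lemma diag_case {m n : ℕ} {lam : ℝ} (hlam : 0 < lam) (σ : ℕ → ℝ) (hσ : ∀ i, 0 ≤ σ i)
    (B : Matrix (Fin m) (Fin n) ℂ) :
    (lam * nuclearNorm (rectDiag m n fun i => max (σ i - lam) 0)
      + (1/2) * ∑ i, ∑ j, ‖(rectDiag m n fun i => max (σ i - lam) 0) i j
          - rectDiag m n σ i j‖ ^ 2)
    ≤ lam * nuclearNorm B + (1/2) * ∑ i, ∑ j, ‖B i j - rectDiag m n σ i j‖ ^ 2
    ∧ ((lam * nuclearNorm B + (1/2) * ∑ i, ∑ j, ‖B i j - rectDiag m n σ i j‖ ^ 2)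
        = (lam * nuclearNorm (rectDiag m n fun i => max (σ i - lam) 0)
      + (1/2) * ∑ i, ∑ j, ‖(rectDiag m n fun i => max (σ i - lam) 0) i j
          - rectDiag m n σ i j‖ ^ 2)
      → B = rectDiag m n fun i => max (σ i - lam) 0) := by
  set σ' : ℕ → ℝ := fun i => max (σ i - lam) 0 with hσ'def
  have hσ' : ∀ i, 0 ≤ σ' i := fun i => le_max_right _ _
  -- the diagonal entries of B
  set z : (j : Fin n) → ((j:ℕ) < m) → ℂ := fun j h => B ⟨(j:ℕ), h⟩ j with hzdef
  set S : ℝ := ∑ j : Fin n, (if h : (j:ℕ) < m then ‖z j h‖ else 0) with hSdef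
  set Dg : ℝ := ∑ j : Fin n,
      (if h : (j:ℕ) < m then ‖z j h - ((σ (j:ℕ) : ℝ) : ℂ)‖ ^ 2 else 0) with hDgdef
  set off : ℝ := ∑ i : Fin m, ∑ j : Fin n,
      (if (i:ℕ) = (j:ℕ) then 0 else ‖B i j‖ ^ 2) with hoffdef
  set rem : Fin n → ℝ := fun j => if h : (j:ℕ) < m then
      σ (j:ℕ) * (‖z j h‖ - (z j h).re)
      + (1/2) * (‖z j h‖ - σ' (j:ℕ))^2 else 0 with hremdef
  set A1 : ℝ := ∑ j : Fin n,
      (if _ : (j:ℕ) < m then lam * σ' (j:ℕ) + (1/2) * (σ' (j:ℕ) - σ (j:ℕ))^2 else 0)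
      with hA1def
  -- (1) frobenius split of B - D
  have hfrobB : ∑ i, ∑ j, ‖B i j - rectDiag m n σ i j‖ ^ 2 = Dg + off := by
    have hsplit : ∀ (i : Fin m) (j : Fin n), ‖B i j - rectDiag m n σ i j‖^2
        = (if (i:ℕ) = (j:ℕ) then ‖B i j - ((σ (j:ℕ):ℝ):ℂ)‖^2 else 0)
          + (if (i:ℕ) = (j:ℕ) then 0 else ‖B i j‖^2) := by
      intro i j
      by_cases h : (i:ℕ) = (j:ℕ) <;> simp [rectDiag, h]
    calc ∑ i, ∑ j, ‖B i j - rectDiag m n σ i j‖ ^ 2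
        = (∑ i : Fin m, ∑ j : Fin n,
            (if (i:ℕ) = (j:ℕ) then ‖B i j - ((σ (j:ℕ):ℝ):ℂ)‖^2 else 0)) + off := by
          rw [hoffdef, ← Finset.sum_add_distrib]
          apply Finset.sum_congr rfl; intro i _
          rw [← Finset.sum_add_distrib]
          exact Finset.sum_congr rfl fun j _ => hsplit i j
      _ = Dg + off := by
          congr 1
          rw [Finset.sum_comm, hDgdef]
          apply Finset.sum_congr rfl; intro j _
          exact SVT.fin_sum_ite (j:ℕ) (fun i => ‖B i j - ((σ (j:ℕ):ℝ):ℂ)‖^2)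
  -- (2) value at the thresholded diagonal matrix
  have hψT : lam * nuclearNorm (rectDiag m n σ')
      + (1/2) * ∑ i, ∑ j, ‖(rectDiag m n σ') i j - rectDiag m n σ i j‖ ^ 2
      = A1 := by
    have hnn := SVT.nuclearNorm_rectDiag m n σ' hσ'
    have hfr : ∑ i, ∑ j, ‖(rectDiag m n σ') i j - rectDiag m n σ i j‖ ^ 2
        = ∑ j : Fin n, (if _ : (j:ℕ) < m then (σ' (j:ℕ) - σ (j:ℕ))^2 else 0) := by
      have hsp : ∀ (i : Fin m) (j : Fin n),
          ‖(rectDiag m n σ') i j - rectDiag m n σ i j‖ ^ 2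
          = (if (i:ℕ) = (j:ℕ) then (σ' (j:ℕ) - σ (j:ℕ))^2 else 0) := by
        intro i j
        by_cases h : (i:ℕ) = (j:ℕ)
        · have e1 : (rectDiag m n σ') i j = ((σ' (j:ℕ) : ℝ) : ℂ) := by simp [rectDiag, h]
          have e2 : (rectDiag m n σ) i j = ((σ (j:ℕ) : ℝ) : ℂ) := by simp [rectDiag, h]
          rw [e1, e2, if_pos h, ← Complex.ofReal_sub, Complex.sq_norm, Complex.normSq_apply]
          simp only [Complex.ofReal_re, Complex.ofReal_im]
          ring
        · simp [rectDiag, h]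
      rw [Finset.sum_comm]
      apply Finset.sum_congr rfl; intro j _
      rw [Finset.sum_congr rfl (fun i _ => hsp i j)]
      exact SVT.fin_sum_ite (j:ℕ) (fun i => (σ' (j:ℕ) - σ (j:ℕ))^2)
    rw [hnn, hfr, hA1def, Finset.mul_sum, Finset.mul_sum, ← Finset.sum_add_distrib]
    apply Finset.sum_congr rfl; intro j _
    by_cases h : (j:ℕ) < m <;> simp [h]
  -- (3) summed scalar inequality
  have hsum1 : A1 + ∑ j, rem j ≤ lam * S + (1/2) * Dg := by
    have hkey : ∀ j : Fin n,
        (if _ : (j:ℕ) < m then lam * σ' (j:ℕ) + (1/2)*(σ' (j:ℕ) - σ (j:ℕ))^2 else 0) + rem j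
        ≤ (if h : (j:ℕ) < m then lam * ‖z j h‖ else 0)
          + (if h : (j:ℕ) < m then (1/2) * ‖z j h - ((σ (j:ℕ):ℝ):ℂ)‖^2 else 0) := by
      intro j
      rw [hremdef]
      by_cases h : (j:ℕ) < m
      · simp only [dif_pos h]
        have := SVT.scalar_ineq hlam (hσ (j:ℕ)) (z j h)
        rw [hσ'def]
        linarith
      · simp [h]
    calc A1 + ∑ j, rem j
        = ∑ j : Fin n, ((if _ : (j:ℕ) < m then lam * σ' (j:ℕ)
            + (1/2)*(σ' (j:ℕ) - σ (j:ℕ))^2 else 0) + rem j) := by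
          rw [Finset.sum_add_distrib, hA1def]
      _ ≤ ∑ j : Fin n, ((if h : (j:ℕ) < m then lam * ‖z j h‖ else 0)
          + (if h : (j:ℕ) < m then (1/2) * ‖z j h - ((σ (j:ℕ):ℝ):ℂ)‖^2 else 0)) :=
          Finset.sum_le_sum fun j _ => hkey j
      _ = lam * S + (1/2) * Dg := by
          rw [Finset.sum_add_distrib, hSdef, hDgdef, Finset.mul_sum, Finset.mul_sum]
          congr 1
          · apply Finset.sum_congr rfl
            intro j _
            by_cases h : (j:ℕ) < m <;> simp [h]
          · apply Finset.sum_congr rfl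
            intro j _
            by_cases h : (j:ℕ) < m <;> simp [h]
  have hSle : S ≤ nuclearNorm B := SVT.diagSum_le_nuclearNorm B
  have hlamS : lam * S ≤ lam * nuclearNorm B := mul_le_mul_of_nonneg_left hSle hlam.le
  have hrem0 : ∀ j, 0 ≤ rem j := by
    intro j
    rw [hremdef]
    by_cases h : (j:ℕ) < m
    · simp only [dif_pos h]
      have h1 : 0 ≤ σ (j:ℕ) * (‖z j h‖ - (z j h).re) :=
        mul_nonneg (hσ _) (by linarith [Complex.re_le_norm (z j h)])
      nlinarith [sq_nonneg (‖z j h‖ - σ' (j:ℕ))]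
    · simp [h]
  have hremsum0 : 0 ≤ ∑ j, rem j := Finset.sum_nonneg fun j _ => hrem0 j
  have hoff0 : 0 ≤ off := by
    rw [hoffdef]
    apply Finset.sum_nonneg; intro i _
    apply Finset.sum_nonneg; intro j _
    by_cases h : (i:ℕ) = (j:ℕ) <;> simp [h, sq_nonneg]
  constructor
  · rw [hψT, hfrobB]
    linarith
  · intro heq
    rw [hψT, hfrobB] at heq
    -- all slack terms vanish
    have hz0 : lam * (nuclearNorm B - S) + (∑ j, rem j) + (1/2) * off ≤ 0 := by linarith
    have hnuc0 : 0 ≤ lam * (nuclearNorm B - S) := mul_nonneg hlam.le (by linarith)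
    have hremz : ∑ j, rem j = 0 := le_antisymm (by linarith) hremsum0
    have hoffz : off = 0 := le_antisymm (by linarith) hoff0
    have hremj : ∀ j ∈ Finset.univ, rem j = 0 :=
      (Finset.sum_eq_zero_iff_of_nonneg (fun j _ => hrem0 j)).mp hremz
    have hterm : ∀ (i : Fin m) (j : Fin n),
        0 ≤ (if (i:ℕ) = (j:ℕ) then 0 else ‖B i j‖ ^ 2) := by
      intro i j
      by_cases h : (i:ℕ) = (j:ℕ) <;> simp [h, sq_nonneg]
    have hoffz' : (∑ i : Fin m, ∑ j : Fin n,
        (if (i:ℕ) = (j:ℕ) then 0 else ‖B i j‖ ^ 2)) = 0 := by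
      rw [← hoffdef]; exact hoffz
    have hrow : ∀ i : Fin m, (∑ j : Fin n,
        (if (i:ℕ) = (j:ℕ) then 0 else ‖B i j‖ ^ 2)) = 0 := fun i =>
      (Finset.sum_eq_zero_iff_of_nonneg (fun i _ =>
        Finset.sum_nonneg (fun j _ => hterm i j))).mp hoffz' i (Finset.mem_univ i)
    have hoffij : ∀ (i : Fin m) (j : Fin n), (i:ℕ) ≠ (j:ℕ) → B i j = 0 := by
      intro i j hij
      have h2 := (Finset.sum_eq_zero_iff_of_nonneg (fun j _ => hterm i j)).mp
        (hrow i) j (Finset.mem_univ j)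
      rw [if_neg hij] at h2
      exact norm_eq_zero.mp (pow_eq_zero_iff (n := 2) (by norm_num) |>.mp h2)
    -- conclude B = rectDiag σ'
    ext i j
    by_cases hij : (i:ℕ) = (j:ℕ)
    · have hjm : (j:ℕ) < m := hij ▸ i.2
      have hi : i = ⟨(j:ℕ), hjm⟩ := Fin.ext hij
      have hr := hremj j (Finset.mem_univ j)
      simp only [hremdef] at hr
      rw [dif_pos hjm] at hr
      have ha : 0 ≤ σ (j:ℕ) * (‖z j hjm‖ - (z j hjm).re) :=
        mul_nonneg (hσ _) (by linarith [Complex.re_le_norm (z j hjm)])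
      have hb : 0 ≤ (1/2) * (‖z j hjm‖ - σ' (j:ℕ))^2 := by positivity
      have h1 : σ (j:ℕ) * (‖z j hjm‖ - (z j hjm).re) = 0 := by linarith
      have h2' : (‖z j hjm‖ - σ' (j:ℕ))^2 = 0 := by linarith
      have h2 : ‖z j hjm‖ = σ' (j:ℕ) := by
        have := pow_eq_zero_iff (n := 2) (by norm_num) |>.mp h2'
        linarith
      have hzval := SVT.scalar_eq_case hlam (hσ (j:ℕ)) (z j hjm) h1 (by rw [h2, hσ'def])
      have hBij : B i j = z j hjm := by rw [hzdef, hi]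
      rw [hBij, hzval]
      simp [rectDiag, hij, hσ'def]
    · rw [hoffij i j hij]
      simp [rectDiag, hij]


theorem singular_value_thresholding {m n : ℕ} (lam : ℝ) (hlam : 0 < lam)
    (Y : Matrix (Fin m) (Fin n) ℂ)
    (U : Matrix (Fin m) (Fin m) ℂ) (V : Matrix (Fin n) (Fin n) ℂ)
    (hU : U ∈ Matrix.unitaryGroup (Fin m) ℂ) (hV : V ∈ Matrix.unitaryGroup (Fin n) ℂ)
    (σ : ℕ → ℝ) (hσ : ∀ i, 0 ≤ σ i)
    (hY : Y = U * rectDiag m n σ * Vᴴ)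
    (Xstar : Matrix (Fin m) (Fin n) ℂ)
    (hX : Xstar = U * rectDiag m n (fun i => max (σ i - lam) 0) * Vᴴ)
    (Φ : Matrix (Fin m) (Fin n) ℂ → ℝ)
    (hΦ : ∀ X, Φ X = lam * nuclearNorm X +
      (1 / 2) * ∑ i, ∑ j, ‖X i j - Y i j‖ ^ 2) :
    (∀ X, Φ Xstar ≤ Φ X) ∧ (∀ X, Φ X = Φ Xstar → X = Xstar) := by
  subst hY hX
  have hUUc : U * Uᴴ = 1 := by
    rw [← Matrix.star_eq_conjTranspose]; exact (Matrix.mem_unitaryGroup_iff).mp hU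
  have hUU : Uᴴ * U = 1 := by
    rw [← Matrix.star_eq_conjTranspose]; exact (Matrix.mem_unitaryGroup_iff').mp hU
  have hVVc : V * Vᴴ = 1 := by
    rw [← Matrix.star_eq_conjTranspose]; exact (Matrix.mem_unitaryGroup_iff).mp hV
  have hVV : Vᴴ * V = 1 := by
    rw [← Matrix.star_eq_conjTranspose]; exact (Matrix.mem_unitaryGroup_iff').mp hV
  have hUs : Uᴴ ∈ Matrix.unitaryGroup (Fin m) ℂ := by
    rw [← Matrix.star_eq_conjTranspose]; exact Unitary.star_mem hU
  have hVs : Vᴴ ∈ Matrix.unitaryGroup (Fin n) ℂ := by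
    rw [← Matrix.star_eq_conjTranspose]; exact Unitary.star_mem hV
  have hrepr : ∀ X : Matrix (Fin m) (Fin n) ℂ, U * (Uᴴ * X * V) * Vᴴ = X := by
    intro X
    simp only [← Matrix.mul_assoc]
    rw [hUUc, Matrix.one_mul, Matrix.mul_assoc, hVVc, Matrix.mul_one]
  have hback : ∀ T : Matrix (Fin m) (Fin n) ℂ, Uᴴ * (U * T * Vᴴ) * V = T := by
    intro T
    simp only [← Matrix.mul_assoc]
    rw [hUU, Matrix.one_mul, Matrix.mul_assoc, hVV, Matrix.mul_one]
  have hΦeq : ∀ X, Φ X = lam * nuclearNorm (Uᴴ * X * V)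
      + (1/2) * ∑ i, ∑ j, ‖(Uᴴ * X * V) i j - rectDiag m n σ i j‖ ^ 2 := by
    intro X
    rw [hΦ]
    congr 1
    · congr 1
      have h := SVT.nuclearNorm_conj X hUs hVs
      rw [Matrix.conjTranspose_conjTranspose] at h
      rw [h]
    · congr 1
      have h1 : ∀ (i : Fin m) (j : Fin n),
          X i j - (U * rectDiag m n σ * Vᴴ) i j
          = (U * ((Uᴴ * X * V) - rectDiag m n σ) * Vᴴ) i j := by
        intro i j
        rw [Matrix.mul_sub, Matrix.sub_mul, hrepr X]
        simp [Matrix.sub_apply]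
      rw [Finset.sum_congr rfl (fun i _ => Finset.sum_congr rfl (fun j _ => by rw [h1 i j]))]
      rw [SVT.frob_conj ((Uᴴ * X * V) - rectDiag m n σ) hU hV]
      apply Finset.sum_congr rfl; intro i _
      apply Finset.sum_congr rfl; intro j _
      rw [Matrix.sub_apply]
  constructor
  · intro X
    rw [hΦeq X, hΦeq (U * rectDiag m n (fun i => max (σ i - lam) 0) * Vᴴ), hback]
    exact (diag_case hlam σ hσ (Uᴴ * X * V)).1
  · intro X hXe
    rw [hΦeq X, hΦeq (U * rectDiag m n (fun i => max (σ i - lam) 0) * Vᴴ), hback] at hXe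
    have hB := (diag_case hlam σ hσ (Uᴴ * X * V)).2 hXe
    rw [← hrepr X, hB]
end
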